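/- Fix ε > 0, a probability measure μ₀ on (Θ, ℬ), and a measurable set E with μ₀(E) ∈ (0,1). Define ν(B) = (e^ε μ₀(B ∩ E) + μ₀(B \ E)) / (e^ε μ₀(E) + (1 − μ₀(E))) for all measurable B. Then ν is a probability measure and ν satisfies the ε-inferential-privacy constraint: for all measurable B', B'' with μ₀(B'), μ₀(B'') > 0, ν(B') μ₀(B'') ≤ e^ε ν(B'') μ₀(B'). -/

import Mathlib

open MeasureTheory

/-- The uniform-tilt posterior ν(B) = (e^ε μ₀(B∩E) + μ₀(B\E)) / (e^ε μ₀(E) + (1-μ₀(E)))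
is a probability measure satisfying the ε-inferential-privacy constraint. -/
theorem stmt_5 {Θ : Type*} [MeasurableSpace Θ] (μ₀ : Measure Θ) [IsProbabilityMeasure μ₀]
    (ε : ℝ) (hε : 0 < ε) (E : Set Θ) (hE : MeasurableSet E)
    (hE0 : 0 < μ₀ E) (hE1 : μ₀ E < 1)
    (ν : Measure Θ)
    (hν : ∀ B, MeasurableSet B → ν B =
      (ENNReal.ofReal (Real.exp ε) * μ₀ (B ∩ E) + μ₀ (B \ E)) /
        (ENNReal.ofReal (Real.exp ε) * μ₀ E + (1 - μ₀ E))) :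
    IsProbabilityMeasure ν ∧
    ∀ B' B'', MeasurableSet B' → MeasurableSet B'' → 0 < μ₀ B' → 0 < μ₀ B'' →
      ν B' * μ₀ B'' ≤ ENNReal.ofReal (Real.exp ε) * (ν B'' * μ₀ B') := by
  set e := ENNReal.ofReal (Real.exp ε) with he
  have he1 : 1 ≤ e := ENNReal.one_le_ofReal.mpr (Real.one_le_exp hε.le)
  have heT : e ≠ ⊤ := ENNReal.ofReal_ne_top
  set D := e * μ₀ E + (1 - μ₀ E) with hD
  have hD0 : D ≠ 0 := by
    have : 0 < e * μ₀ E := by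
      refine ENNReal.mul_pos ?_ hE0.ne'
      exact (lt_of_lt_of_le one_pos he1).ne'
    exact (this.trans_le le_self_add).ne'
  have hDT : D ≠ ⊤ := by
    refine ENNReal.add_ne_top.2 ⟨ENNReal.mul_ne_top heT (measure_ne_top _ _), ?_⟩
    exact (tsub_le_self.trans_lt ENNReal.one_lt_top).ne
  constructor
  · constructor
    have hcompl : μ₀ Eᶜ = 1 - μ₀ E := by
      rw [measure_compl hE (measure_ne_top _ _), measure_univ]
    rw [hν Set.univ MeasurableSet.univ, Set.univ_inter, ← Set.compl_eq_univ_diff, hcompl]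
    exact ENNReal.div_self hD0 hDT
  · intro B' B'' hB' hB'' h1 h2
    rw [hν B' hB', hν B'' hB'']
    rw [div_eq_mul_inv, div_eq_mul_inv, mul_right_comm _ D⁻¹ (μ₀ B''),
      mul_right_comm _ D⁻¹ (μ₀ B'), ← mul_assoc e]
    refine mul_le_mul_left ?_ D⁻¹
    calc (e * μ₀ (B' ∩ E) + μ₀ (B' \ E)) * μ₀ B''
        ≤ (e * μ₀ (B' ∩ E) + e * μ₀ (B' \ E)) * μ₀ B'' := by
          gcongr; exact le_mul_of_one_le_left zero_le he1
      _ = e * (μ₀ B' * μ₀ B'') := by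
          rw [← mul_add, measure_inter_add_diff B' hE, mul_assoc]
      _ ≤ e * ((e * μ₀ (B'' ∩ E) + μ₀ (B'' \ E)) * μ₀ B') := by
          refine mul_le_mul_right ?_ e
          rw [mul_comm (μ₀ B')]
          refine mul_le_mul_left ?_ (μ₀ B')
          calc μ₀ B'' = μ₀ (B'' ∩ E) + μ₀ (B'' \ E) := (measure_inter_add_diff B'' hE).symm
            _ ≤ e * μ₀ (B'' ∩ E) + μ₀ (B'' \ E) :=
                add_le_add_left (le_mul_of_one_le_left zero_le he1) _
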